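/- Let A, B, C be homogeneous polynomials of degree d+1 in X, Y, Z satisfying the projectivity condition X·A + Y·B + Z·C = 0. Then there exist homogeneous polynomials P, Q, R of degree d such that A = Z·Q − Y·R, B = X·R − Z·P and C = Y·P − X·Q. -/
import Mathlib

open MvPolynomial

namespace Stmt6Aux

variable {σ : Type*}

lemma coeff_mod (i : σ) (p : MvPolynomial σ ℂ) (m : σ →₀ ℕ) :
    coeff m (p.modMonomial (Finsupp.single i 1)) = if m i = 0 then coeff m p else 0 := by
  by_cases h : Finsupp.single i 1 ≤ m
  · rw [coeff_modMonomial_of_le _ h, if_neg]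
    rw [Finsupp.single_le_iff] at h
    omega
  · rw [coeff_modMonomial_of_not_le _ h, if_pos]
    rw [Finsupp.single_le_iff] at h
    omega

lemma homog_of_X_mul {i : σ} {S : MvPolynomial σ ℂ} {n : ℕ}
    (h : (X i * S).IsHomogeneous (n + 1)) : S.IsHomogeneous n := by
  intro m hm
  have h1 : coeff (Finsupp.single i 1 + m) (X i * S) ≠ 0 := by
    rwa [coeff_X_mul]
  have h2 := h h1
  have h3 : (Finsupp.weight 1) (Finsupp.single i 1 + m) =
      1 + (Finsupp.weight 1) m := by
    rw [map_add]
    simp [Finsupp.weight_apply, Finsupp.sum_single_index]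
  rw [h3] at h2
  omega

end Stmt6Aux

open Stmt6Aux

/-- Characterization of projective 1-forms: if `A, B, C` are homogeneous of degree `d+1` and
`X·A + Y·B + Z·C = 0`, then there exist homogeneous `P, Q, R` of degree `d` with
`A = ZQ - YR`, `B = XR - ZP`, `C = YP - XQ`. -/
theorem stmt_6 (d : ℕ) (A B C : MvPolynomial (Fin 3) ℂ)
    (hA : A.IsHomogeneous (d + 1)) (hB : B.IsHomogeneous (d + 1))
    (hC : C.IsHomogeneous (d + 1))
    (h : MvPolynomial.X 0 * A + MvPolynomial.X 1 * B + MvPolynomial.X 2 * C = 0) :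
    ∃ P Q R : MvPolynomial (Fin 3) ℂ,
      P.IsHomogeneous d ∧ Q.IsHomogeneous d ∧ R.IsHomogeneous d ∧
      A = MvPolynomial.X 2 * Q - MvPolynomial.X 1 * R ∧
      B = MvPolynomial.X 0 * R - MvPolynomial.X 2 * P ∧
      C = MvPolynomial.X 1 * P - MvPolynomial.X 0 * Q := by
  classical
  set e2 : Fin 3 →₀ ℕ := Finsupp.single 2 1 with he2
  -- decompose A and B along the variable `X 2`
  set A0 := A.modMonomial e2 with hA0
  set A1 := A.divMonomial e2 with hA1
  set B0 := B.modMonomial e2 with hB0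
  set B1 := B.divMonomial e2 with hB1
  have hAsplit : A = X 2 * A1 + A0 := (divMonomial_add_modMonomial_single A 2).symm
  have hBsplit : B = X 2 * B1 + B0 := (divMonomial_add_modMonomial_single B 2).symm
  -- coefficients of A0, B0
  have hcA0 : ∀ m : Fin 3 →₀ ℕ, coeff m A0 = if m 2 = 0 then coeff m A else 0 :=
    fun m => coeff_mod 2 A m
  have hcB0 : ∀ m : Fin 3 →₀ ℕ, coeff m B0 = if m 2 = 0 then coeff m B else 0 :=
    fun m => coeff_mod 2 B m
  -- homogeneity of A0, B0
  have hA0hom : A0.IsHomogeneous (d + 1) := by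
    intro m hm
    rw [hcA0 m] at hm
    split_ifs at hm
    · exact hA hm
    · exact absurd rfl hm
  have hB0hom : B0.IsHomogeneous (d + 1) := by
    intro m hm
    rw [hcB0 m] at hm
    split_ifs at hm
    · exact hB hm
    · exact absurd rfl hm
  -- the relation modulo Z : X0 * A0 + X1 * B0 = 0
  have key : X 0 * A0 + X 1 * B0 = 0 := by
    ext m
    rw [coeff_add, coeff_zero]
    by_cases hm2 : m 2 = 0
    · have h0 : coeff m (X 0 * A0) = coeff m (X 0 * A) := by
        rw [coeff_X_mul', coeff_X_mul']
        split_ifs with hs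
        · rw [hcA0, if_pos]
          have : (0 : Fin 3) ≠ 2 := by decide
          simp [Finsupp.single_apply, this, hm2]
        · rfl
      have h1 : coeff m (X 1 * B0) = coeff m (X 1 * B) := by
        rw [coeff_X_mul', coeff_X_mul']
        split_ifs with hs
        · rw [hcB0, if_pos]
          have : (1 : Fin 3) ≠ 2 := by decide
          simp [Finsupp.single_apply, this, hm2]
        · rfl
      have h2 : coeff m (X 2 * C) = 0 := by
        rw [coeff_X_mul']
        rw [if_neg]
        simp [Finsupp.mem_support_iff, hm2]
      have h3 := congrArg (coeff m) h
      rw [coeff_add, coeff_add, coeff_zero, h2, add_zero] at h3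
      rw [h0, h1, h3]
    · have h0 : coeff m (X 0 * A0) = 0 := by
        rw [coeff_X_mul']
        split_ifs with hs
        · rw [hcA0, if_neg]
          have : (0 : Fin 3) ≠ 2 := by decide
          simpa [Finsupp.single_apply, this] using hm2
        · rfl
      have h1 : coeff m (X 1 * B0) = 0 := by
        rw [coeff_X_mul']
        split_ifs with hs
        · rw [hcB0, if_neg]
          have : (1 : Fin 3) ≠ 2 := by decide
          simpa [Finsupp.single_apply, this] using hm2
        · rfl
      rw [h0, h1, add_zero]
  -- X1 divides A0
  have hA0mod : A0.modMonomial (Finsupp.single 1 1) = 0 := by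
    ext m
    rw [coeff_mod, coeff_zero]
    split_ifs with hm1
    · by_contra hne
      have hc : coeff (Finsupp.single 0 1 + m) (X 0 * A0) ≠ 0 := by rwa [coeff_X_mul]
      have hXB : X 1 * B0 = -(X 0 * A0) := by linear_combination key
      have hc2 : coeff (Finsupp.single 0 1 + m) (X 1 * B0) ≠ 0 := by
        rw [hXB, coeff_neg]
        simpa using hc
      rw [coeff_X_mul'] at hc2
      split_ifs at hc2 with hs
      · rw [Finsupp.mem_support_iff] at hs
        have h01 : (0 : Fin 3) ≠ 1 := by decide
        have hm1' : m 1 ≠ 0 := by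
          simpa [Finsupp.add_apply, Finsupp.single_apply, h01] using hs
        omega
      · exact hc2 rfl
    · rfl
  set S := A0.divMonomial (Finsupp.single 1 1) with hS
  have hA0eq : A0 = X 1 * S := by
    have := divMonomial_add_modMonomial_single A0 1
    rw [hA0mod, add_zero] at this
    exact this.symm
  -- B0 = -(X0 * S)
  have hB0eq : B0 = -(X 0 * S) := by
    have hX1 : (X 1 : MvPolynomial (Fin 3) ℂ) ≠ 0 := X_ne_zero 1
    have : X 1 * B0 = X 1 * (-(X 0 * S)) := by
      rw [hA0eq] at key
      ring_nf
      ring_nf at key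
      linear_combination key
    exact mul_left_cancel₀ hX1 this
  -- C = -(X0 * A1) - X1 * B1
  have hCeq : C = -(X 0 * A1) - X 1 * B1 := by
    have hX2 : (X 2 : MvPolynomial (Fin 3) ℂ) ≠ 0 := X_ne_zero 2
    have h2 : X 2 * C = X 2 * (-(X 0 * A1) - X 1 * B1) := by
      rw [hAsplit, hBsplit, hA0eq, hB0eq] at h
      linear_combination h
    exact mul_left_cancel₀ hX2 h2
  -- homogeneity of the pieces
  have hShom : S.IsHomogeneous d := homog_of_X_mul (hA0eq ▸ hA0hom)
  have hA1hom : A1.IsHomogeneous d := by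
    apply homog_of_X_mul (i := (2 : Fin 3))
    have : X 2 * A1 = A - A0 := by rw [hAsplit]; ring
    rw [this]
    exact hA.sub hA0hom
  have hB1hom : B1.IsHomogeneous d := by
    apply homog_of_X_mul (i := (2 : Fin 3))
    have : X 2 * B1 = B - B0 := by rw [hBsplit]; ring
    rw [this]
    exact hB.sub hB0hom
  refine ⟨-B1, A1, -S, hB1hom.neg, hA1hom, hShom.neg, ?_, ?_, ?_⟩
  · rw [hAsplit, hA0eq]; ring
  · rw [hBsplit, hB0eq]; ring
  · rw [hCeq]; ring
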